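/- For every positive integer n, the cardinality of 𝒟_n equals Σ_b n! · Σ_{α ⊆ V(b)} Π_{v ∈ α} 1/h(v), where the sum is over all unlabeled binary trees b on n vertices and h(v) is the number of descendants of v (including v). -/

import Mathlib

/-- Unlabeled binary trees: each vertex has an (optional) left and right subtree.
`nil` is the empty tree. -/
inductive UBT : Type
  | nil : UBT
  | node : UBT → UBT → UBT
deriving DecidableEq

/-- Number of vertices of an unlabeled binary tree. -/
def UBT.size : UBT → ℕ
  | .nil => 0
  | .node l r => l.size + r.size + 1

/-- The vertex set of an unlabeled binary tree, encoded as root-to-vertex paths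
(`false` = step to the left child, `true` = step to the right child). -/
def UBT.verts : UBT → Finset (List Bool)
  | .nil => ∅
  | .node l r => insert [] ((l.verts.image (List.cons false)) ∪ (r.verts.image (List.cons true)))

/-- The descendant subtree at a given position, so for a vertex `v` of `b`,
`h(v) = ((b.sub v).size`, the number of descendants of `v` (including `v`). -/
def UBT.sub : UBT → List Bool → UBT
  | t, [] => t
  | .nil, _ => .nil
  | .node l r, b :: p => if b then r.sub p else l.sub p

/-- The (finite) set of all unlabeled binary trees on `n` vertices. -/
def treesOfSize : ℕ → Finset UBT
  | 0 => {UBT.nil}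
  | n + 1 =>
      (Finset.range (n + 1)).attach.biUnion fun i =>
        ((treesOfSize i.1) ×ˢ (treesOfSize (n - i.1))).image fun p => UBT.node p.1 p.2
decreasing_by
  all_goals (have := i.2; simp only [Finset.mem_range] at this; omega)

/-- Labeled bicolored binary trees: each vertex carries a label and a color
(`true` = black, `false` = white), and has a left and a right (possibly empty) subtree. -/
inductive CBT : Type
  | nil : CBT
  | node (label : ℕ) (black : Bool) (l r : CBT) : CBT
deriving DecidableEq

/-- The multiset of labels of a bicolored binary tree. -/
def CBT.labels : CBT → Multiset ℕ
  | .nil => 0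
  | .node a _ l r => a ::ₘ (l.labels + r.labels)

/-- The smallest label of a bicolored binary tree (`⊤` for the empty tree). -/
noncomputable def CBT.minL : CBT → ℕ∞
  | .nil => ⊤
  | .node a _ l r => min (a : ℕ∞) (min l.minL r.minL)

/-- A vertex is *proper* if its label is the smallest among its descendants (including
itself), and *improper* otherwise; so the vertex `node a c l r` is improper iff
`min l.minL r.minL < a`.  `CBT.improperBlack B` says every improper vertex of `B` is black. -/
def CBT.improperBlack : CBT → Prop
  | .nil => True
  | .node a c l r =>
      (min l.minL r.minL < (a : ℕ∞) → c = true) ∧ l.improperBlack ∧ r.improperBlack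

/-- `𝒟_n`: bicolored binary trees on `[n] = {1,…,n}` whose improper vertices are all black. -/
def Dset (n : ℕ) : Set CBT :=
  {B | B.labels = (Finset.Icc 1 n).val ∧ B.improperBlack}


open Finset

/-- number counting recurrence -/
def Dcount : ℕ → ℕ
  | 0 => 1
  | n+1 => (n+2) * ∑ k ∈ (Finset.range (n+1)).attach,
      (n.choose k.1) * Dcount k.1 * Dcount (n - k.1)
decreasing_by
  all_goals (have := k.2; simp only [Finset.mem_range] at this; omega)

lemma Dcount_succ (n : ℕ) : Dcount (n+1)
    = (n+2) * ∑ k ∈ Finset.range (n+1), (n.choose k) * Dcount k * Dcount (n-k) := by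
  rw [Dcount]
  exact congrArg _ (Finset.sum_attach _ fun k => n.choose k * Dcount k * Dcount (n-k))

lemma mem_treesOfSize : ∀ (n : ℕ) (b : UBT), b ∈ treesOfSize n ↔ b.size = n := by
  intro n
  induction n using Nat.strong_induction_on with
  | _ n ih =>
    intro b
    match n with
    | 0 =>
      cases b with
      | nil => simp [treesOfSize, UBT.size]
      | node l r => simp [treesOfSize, UBT.size]
    | n+1 =>
      rw [treesOfSize]
      cases b with
      | nil =>
        simp only [Finset.mem_biUnion, Finset.mem_image, Finset.mem_attach, true_and]
        constructor
        · rintro ⟨i, p, -, h⟩; cases h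
        · intro h; simp [UBT.size] at h
      | node l r =>
        simp only [Finset.mem_biUnion, Finset.mem_image, Finset.mem_attach, true_and,
          Finset.mem_product]
        constructor
        · rintro ⟨i, ⟨l', r'⟩, ⟨hl, hr⟩, h⟩
          injection h with h1 h2
          subst h1; subst h2
          have hi := i.2
          simp only [Finset.mem_range] at hi
          have h1 := (ih i.1 (by omega) _).mp hl
          have h2 := (ih (n - i.1) (by omega) _).mp hr
          dsimp only at h1 h2
          simp only [UBT.size]; omega
        · intro h
          simp only [UBT.size] at h
          refine ⟨⟨l.size, ?_⟩, (l, r), ⟨?_, ?_⟩, rfl⟩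
          · simp only [Finset.mem_range]; omega
          · exact (ih (l.size) (by omega) l).mpr rfl
          · exact (ih (n - l.size) (by omega) r).mpr (by omega)

noncomputable def Pval (b : UBT) : ℚ := ∏ v ∈ b.verts, (1/((b.sub v).size : ℚ) + 1)

lemma sub_node_false (l r : UBT) (p : List Bool) :
    (UBT.node l r).sub (false :: p) = l.sub p := by simp [UBT.sub]

lemma sub_node_true (l r : UBT) (p : List Bool) :
    (UBT.node l r).sub (true :: p) = r.sub p := by simp [UBT.sub]

lemma Pval_node (l r : UBT) :
    Pval (UBT.node l r) = (1/((l.size + r.size + 1 : ℕ) : ℚ) + 1) * (Pval l * Pval r) := by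
  unfold Pval
  rw [show (UBT.node l r).verts
      = insert [] ((l.verts.image (List.cons false)) ∪ (r.verts.image (List.cons true))) from rfl]
  have hnm : ([] : List Bool) ∉ (l.verts.image (List.cons false)) ∪ (r.verts.image (List.cons true)) := by
    simp only [Finset.mem_union, Finset.mem_image]
    rintro (⟨u, -, h⟩ | ⟨u, -, h⟩) <;> cases h
  have hdisj : Disjoint (l.verts.image (List.cons false)) (r.verts.image (List.cons true)) := by
    rw [Finset.disjoint_left]
    rintro x hx hy
    simp only [Finset.mem_image] at hx hy
    obtain ⟨u, -, rfl⟩ := hx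
    obtain ⟨w, -, h⟩ := hy
    simp at h
  rw [Finset.prod_insert hnm, Finset.prod_union hdisj]
  have h1 : ∏ v ∈ l.verts.image (List.cons false),
      (1/(((UBT.node l r).sub v).size : ℚ) + 1) = Pval l := by
    rw [Finset.prod_image (by intro a _ b _ h; injection h)]
    exact Finset.prod_congr rfl fun v _ => by rw [sub_node_false]
  have h2 : ∏ v ∈ r.verts.image (List.cons true),
      (1/(((UBT.node l r).sub v).size : ℚ) + 1) = Pval r := by
    rw [Finset.prod_image (by intro a _ b _ h; injection h)]
    exact Finset.prod_congr rfl fun v _ => by rw [sub_node_true]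
  rw [h1, h2]
  congr 1

lemma sum_Pval_eq_Dcount : ∀ n : ℕ,
    ∑ b ∈ treesOfSize n, (n.factorial : ℚ) * Pval b = (Dcount n : ℚ) := by
  intro n
  induction n using Nat.strong_induction_on with
  | _ n ih =>
    match n with
    | 0 => simp [treesOfSize, Pval, UBT.verts, Dcount]
    | n+1 =>
      rw [treesOfSize]
      rw [Finset.sum_biUnion]
      swap
      · -- pairwise disjoint
        intro i _ j _ hij
        simp only [Function.onFun]
        rw [Finset.disjoint_left]
        rintro b hb hb'
        simp only [Finset.mem_image, Finset.mem_product] at hb hb'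
        obtain ⟨⟨l, r⟩, ⟨hl, -⟩, rfl⟩ := hb
        obtain ⟨⟨l', r'⟩, ⟨hl', -⟩, h⟩ := hb'
        injection h with e1 e2
        dsimp only at hl hl' e1 e2
        subst e1; subst e2
        have := (mem_treesOfSize _ _).mp hl
        have := (mem_treesOfSize _ _).mp hl'
        exact hij (Subtype.ext (by omega))
      have key : ∀ i : {x // x ∈ Finset.range (n+1)},
          ∑ b ∈ ((treesOfSize i.1) ×ˢ (treesOfSize (n - i.1))).image
              (fun p => UBT.node p.1 p.2), ((n+1).factorial : ℚ) * Pval b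
          = (n+2) * (n.choose i.1) * (Dcount i.1) * (Dcount (n - i.1)) := by
        intro i
        have hi : i.1 ≤ n := by have := i.2; simp only [Finset.mem_range] at this; omega
        rw [Finset.sum_image (by
          rintro ⟨l, r⟩ - ⟨l', r'⟩ - h
          injection h with e1 e2
          dsimp only at e1 e2
          simp [e1, e2])]
        rw [Finset.sum_product]
        have hterm : ∀ l ∈ treesOfSize i.1, ∀ r ∈ treesOfSize (n - i.1),
            ((n+1).factorial : ℚ) * Pval (UBT.node l r)
            = ((n+2) * (n.choose i.1)) *
              (((i.1).factorial : ℚ) * Pval l * (((n - i.1).factorial : ℚ) * Pval r)) := by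
          intro l hl r hr
          have hls : l.size = i.1 := (mem_treesOfSize _ _).mp hl
          have hrs : r.size = n - i.1 := (mem_treesOfSize _ _).mp hr
          rw [Pval_node]
          have hsz : l.size + r.size + 1 = n + 1 := by omega
          rw [hsz]
          have h1 : (1/((n+1 : ℕ) : ℚ) + 1) = ((n+2 : ℕ) : ℚ) / ((n+1 : ℕ) : ℚ) := by
            push_cast
            field_simp
            ring
          rw [h1]
          have hfac : ((n+1).factorial : ℚ) = ((n+1 : ℕ) : ℚ) * (n.factorial : ℚ) := by
            push_cast [Nat.factorial_succ]
            ring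
          rw [hfac]
          have hch : (n.factorial : ℚ)
              = (n.choose i.1 : ℚ) * ((i.1).factorial : ℚ) * (((n - i.1)).factorial : ℚ) := by
            rw [Nat.cast_choose ℚ hi]
            field_simp
          rw [hch]
          have : ((n+1:ℕ):ℚ) ≠ 0 := by positivity
          field_simp
          push_cast
          ring
        rw [Finset.sum_congr rfl (fun l hl => Finset.sum_congr rfl (fun r hr => hterm l hl r hr))]
        have e1 : ((i.1).factorial : ℚ) * ∑ b ∈ treesOfSize i.1, Pval b = (Dcount i.1 : ℚ) := by
          rw [Finset.mul_sum]; exact ih i.1 (by omega)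
        have e2 : (((n - i.1)).factorial : ℚ) * ∑ b ∈ treesOfSize (n - i.1), Pval b
            = (Dcount (n - i.1) : ℚ) := by
          rw [Finset.mul_sum]; exact ih (n - i.1) (by omega)
        simp only [← Finset.mul_sum, ← Finset.sum_mul]
        rw [e1, e2]
        ring
      rw [Finset.sum_congr rfl (fun i _ => key i)]
      rw [Finset.sum_attach (Finset.range (n+1))
        (fun k => ((n:ℚ)+2) * (n.choose k) * (Dcount k) * (Dcount (n - k)))]
      rw [Dcount_succ]
      push_cast [Finset.mul_sum]
      exact Finset.sum_congr rfl fun k _ => by ring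

lemma minL_lt_iff (B : CBT) (a : ℕ) : B.minL < (a : ℕ∞) ↔ ∃ x ∈ B.labels, x < a := by
  induction B with
  | nil => simp [CBT.minL, CBT.labels, not_top_lt]
  | node b c l r ihl ihr =>
    simp only [CBT.minL, CBT.labels, min_lt_iff, ihl, ihr, Multiset.mem_cons, Multiset.mem_add,
      Nat.cast_lt]
    constructor
    · rintro (h | ⟨x, hx, hlt⟩ | ⟨x, hx, hlt⟩)
      · exact ⟨b, Or.inl rfl, h⟩
      · exact ⟨x, Or.inr (Or.inl hx), hlt⟩
      · exact ⟨x, Or.inr (Or.inr hx), hlt⟩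
    · rintro ⟨x, (rfl | hx | hx), hlt⟩
      · exact Or.inl hlt
      · exact Or.inr (Or.inl ⟨x, hx, hlt⟩)
      · exact Or.inr (Or.inr ⟨x, hx, hlt⟩)

def colorsFor (S : Finset ℕ) (a : ℕ) : Finset Bool :=
  if ∀ x ∈ S, a ≤ x then {false, true} else {true}

def allTrees (S : Finset ℕ) : Finset CBT :=
  if hS : S = ∅ then {CBT.nil}
  else
    S.attach.biUnion fun a =>
      ((S.erase a.1).powerset.attach).biUnion fun L =>
        ((colorsFor S a.1) ×ˢ (allTrees L.1 ×ˢ allTrees ((S.erase a.1) \ L.1))).image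
          fun p => CBT.node a.1 p.1 p.2.1 p.2.2
termination_by S.card
decreasing_by
  · have h1 : L.1 ⊆ S.erase a.1 := Finset.mem_powerset.mp L.2
    have h2 := Finset.card_le_card h1
    have h3 : (S.erase a.1).card = S.card - 1 := Finset.card_erase_of_mem a.2
    have h4 : S.card ≠ 0 := fun h => hS (Finset.card_eq_zero.mp h)
    omega
  · have h1 : (S.erase a.1) \ L.1 ⊆ S.erase a.1 := Finset.sdiff_subset
    have h2 := Finset.card_le_card h1
    have h3 : (S.erase a.1).card = S.card - 1 := Finset.card_erase_of_mem a.2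
    have h4 : S.card ≠ 0 := fun h => hS (Finset.card_eq_zero.mp h)
    omega

lemma mem_allTrees_aux : ∀ (N : ℕ) (S : Finset ℕ), S.card = N → ∀ B : CBT,
    (B ∈ allTrees S ↔ B.labels = S.val ∧ B.improperBlack) := by
  intro N
  induction N using Nat.strong_induction_on with
  | _ N ih =>
    intro S hS B
    by_cases h0 : S = ∅
    · subst h0
      rw [allTrees, dif_pos rfl]
      cases B with
      | nil => simp [CBT.labels, CBT.improperBlack]
      | node a c l r =>
        simp only [Finset.mem_singleton, CBT.labels, Finset.empty_val]
        constructor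
        · intro h; cases h
        · rintro ⟨h, -⟩; exact absurd h (Multiset.cons_ne_zero)
    · have hN : N ≠ 0 := fun h => h0 (Finset.card_eq_zero.mp (hS.trans h))
      rw [allTrees, dif_neg h0]
      simp only [Finset.mem_biUnion, Finset.mem_attach, true_and, Finset.mem_image,
        Finset.mem_product, Subtype.exists]
      constructor
      · rintro ⟨a, ha, L, hL, ⟨c, l, r⟩, ⟨hc, hl, hr⟩, rfl⟩
        have hLsub : L ⊆ S.erase a := Finset.mem_powerset.mp hL
        have hcardL : L.card < N := by
          have := Finset.card_le_card hLsub
          have := Finset.card_erase_of_mem ha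
          omega
        have hcardR : ((S.erase a) \ L).card < N := by
          have := Finset.card_le_card (Finset.sdiff_subset (s := S.erase a) (t := L))
          have := Finset.card_erase_of_mem ha
          omega
        obtain ⟨hllab, hlib⟩ := (ih L.card hcardL L rfl l).mp hl
        obtain ⟨hrlab, hrib⟩ := (ih _ hcardR _ rfl r).mp hr
        have hsplit : l.labels + r.labels = (S.erase a).val := by
          rw [hllab, hrlab, Finset.sdiff_val]
          exact add_tsub_cancel_of_le (Finset.val_le_iff.mpr hLsub)
        have hlab : (CBT.node a c l r).labels = S.val := by
          show a ::ₘ (l.labels + r.labels) = S.val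
          rw [hsplit, Finset.erase_val]
          exact Multiset.cons_erase (Finset.mem_def.mp ha)
        refine ⟨hlab, ?_, hlib, hrib⟩
        intro hlt
        have : ∃ x ∈ l.labels + r.labels, x < a := by
          rcases min_lt_iff.mp hlt with h | h
          · obtain ⟨x, hx, hxa⟩ := (minL_lt_iff l a).mp h
            exact ⟨x, Multiset.mem_add.mpr (Or.inl hx), hxa⟩
          · obtain ⟨x, hx, hxa⟩ := (minL_lt_iff r a).mp h
            exact ⟨x, Multiset.mem_add.mpr (Or.inr hx), hxa⟩
        obtain ⟨x, hx, hxa⟩ := this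
        rw [hsplit] at hx
        have hxS : x ∈ S := Finset.mem_of_mem_erase (Finset.mem_def.mpr hx)
        have hnmin : ¬ (∀ y ∈ S, a ≤ y) := fun h => absurd (h x hxS) (by omega)
        rw [colorsFor, if_neg hnmin, Finset.mem_singleton] at hc
        exact hc
      · rintro ⟨hlab, hib⟩
        cases B with
        | nil =>
          exfalso
          apply h0
          have : S.val = 0 := hlab.symm
          exact Finset.val_eq_zero.mp this
        | node a c l r =>
          have haS : a ∈ S := Finset.mem_def.mpr (hlab ▸ Multiset.mem_cons_self a _)
          have hrest : l.labels + r.labels = (S.erase a).val := by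
            rw [Finset.erase_val, ← hlab]
            exact (Multiset.erase_cons_head a _).symm
          have hndS : S.val.Nodup := S.nodup
          have hnder : ((S.erase a).val).Nodup := (S.erase a).nodup
          have hll : l.labels ≤ (S.erase a).val := by
            rw [← hrest]; exact Multiset.le_add_right _ _
          have hndl : l.labels.Nodup := Multiset.nodup_of_le hll hnder
          set L : Finset ℕ := ⟨l.labels, hndl⟩ with hLdef
          have hLsub : L ⊆ S.erase a := Finset.val_le_iff.mp hll
          have hrval : r.labels = ((S.erase a) \ L).val := by
            rw [Finset.sdiff_val]
            show r.labels = (S.erase a).val - l.labels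
            rw [← hrest, add_tsub_cancel_left]
          have hcardL : L.card < N := by
            have := Finset.card_le_card hLsub
            have := Finset.card_erase_of_mem haS
            omega
          have hcardR : ((S.erase a) \ L).card < N := by
            have := Finset.card_le_card (Finset.sdiff_subset (s := S.erase a) (t := L))
            have := Finset.card_erase_of_mem haS
            omega
          have hl : l ∈ allTrees L := (ih L.card hcardL L rfl l).mpr ⟨rfl, hib.2.1⟩
          have hr : r ∈ allTrees ((S.erase a) \ L) :=
            (ih _ hcardR _ rfl r).mpr ⟨hrval, hib.2.2⟩
          have hc : c ∈ colorsFor S a := by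
            rw [colorsFor]
            by_cases hmin : ∀ y ∈ S, a ≤ y
            · rw [if_pos hmin]; cases c <;> simp
            · rw [if_neg hmin, Finset.mem_singleton]
              push_neg at hmin
              obtain ⟨x, hxS, hxa⟩ := hmin
              have hxe : x ∈ (S.erase a).val := by
                rw [← Finset.mem_def]
                exact Finset.mem_erase.mpr ⟨by omega, hxS⟩
              rw [← hrest, Multiset.mem_add] at hxe
              apply hib.1
              rcases hxe with hx | hx
              · exact min_lt_iff.mpr (Or.inl ((minL_lt_iff l a).mpr ⟨x, hx, hxa⟩))
              · exact min_lt_iff.mpr (Or.inr ((minL_lt_iff r a).mpr ⟨x, hx, hxa⟩))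
          exact ⟨a, haS, L, Finset.mem_powerset.mpr hLsub, (c, l, r), ⟨hc, hl, hr⟩, rfl⟩

lemma mem_allTrees (S : Finset ℕ) (B : CBT) :
    B ∈ allTrees S ↔ B.labels = S.val ∧ B.improperBlack :=
  mem_allTrees_aux S.card S rfl B

lemma card_colorsFor (S : Finset ℕ) (a : ℕ) :
    (colorsFor S a).card = if ∀ x ∈ S, a ≤ x then 2 else 1 := by
  rw [colorsFor]
  split <;> simp

lemma sum_card_colorsFor (S : Finset ℕ) (hne : S.Nonempty) :
    ∑ a ∈ S, (colorsFor S a).card = S.card + 1 := by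
  have hfil : S.filter (fun a => ∀ x ∈ S, a ≤ x) = {S.min' hne} := by
    ext y
    simp only [Finset.mem_filter, Finset.mem_singleton]
    constructor
    · rintro ⟨hy, hmin⟩
      exact le_antisymm (hmin _ (S.min'_mem hne)) (S.min'_le y hy)
    · rintro rfl
      exact ⟨S.min'_mem hne, fun x hx => S.min'_le x hx⟩
  calc ∑ a ∈ S, (colorsFor S a).card
      = ∑ a ∈ S, (1 + if ∀ x ∈ S, a ≤ x then 1 else 0) := by
        refine Finset.sum_congr rfl fun a _ => ?_
        rw [card_colorsFor]; split <;> rfl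
    _ = S.card + (S.filter (fun a => ∀ x ∈ S, a ≤ x)).card := by
        rw [Finset.sum_add_distrib, Finset.sum_const, smul_eq_mul, mul_one,
          Finset.card_filter]
    _ = S.card + 1 := by rw [hfil, Finset.card_singleton]

lemma card_allTrees_aux : ∀ (N : ℕ) (S : Finset ℕ), S.card = N →
    (allTrees S).card = Dcount N := by
  intro N
  induction N using Nat.strong_induction_on with
  | _ N ih =>
    intro S hS
    match N with
    | 0 =>
      have h0 : S = ∅ := Finset.card_eq_zero.mp hS
      rw [allTrees, dif_pos h0, Finset.card_singleton, Dcount]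
    | N+1 =>
      have h0 : S ≠ ∅ := by
        intro h; rw [h, Finset.card_empty] at hS; omega
      rw [allTrees, dif_neg h0]
      rw [Finset.card_biUnion]
      swap
      · intro a _ a' _ haa'
        simp only [Function.onFun]
        rw [Finset.disjoint_left]
        rintro B hB hB'
        simp only [Finset.mem_biUnion, Finset.mem_attach, true_and, Finset.mem_image,
          Finset.mem_product, Subtype.exists] at hB hB'
        obtain ⟨L, hL, ⟨c, l, r⟩, -, rfl⟩ := hB
        obtain ⟨L', hL', ⟨c', l', r'⟩, -, h⟩ := hB'
        injection h with e1 e2 e3 e4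
        exact haa' (Subtype.ext e1.symm)
      have hinner : ∀ a : {x // x ∈ S},
          (((S.erase a.1).powerset.attach).biUnion fun L =>
            ((colorsFor S a.1) ×ˢ (allTrees L.1 ×ˢ allTrees ((S.erase a.1) \ L.1))).image
              fun p => CBT.node a.1 p.1 p.2.1 p.2.2).card
          = (colorsFor S a.1).card *
            ∑ k ∈ Finset.range (N+1), (N.choose k) * Dcount k * Dcount (N-k) := by
        intro a
        have hcerase : (S.erase a.1).card = N := by
          rw [Finset.card_erase_of_mem a.2, hS]
          omega
        rw [Finset.card_biUnion]
        swap
        · intro L _ L' _ hLL'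
          simp only [Function.onFun]
          rw [Finset.disjoint_left]
          rintro B hB hB'
          simp only [Finset.mem_image, Finset.mem_product] at hB hB'
          obtain ⟨⟨c, l, r⟩, ⟨-, hl, -⟩, rfl⟩ := hB
          obtain ⟨⟨c', l', r'⟩, ⟨-, hl', -⟩, h⟩ := hB'
          injection h with e1 e2 e3 e4
          dsimp only at hl hl' e2 e3 e4
          subst e2; subst e3
          have h1 := ((mem_allTrees _ _).mp hl).1
          have h2 := ((mem_allTrees _ _).mp hl').1
          exact hLL' (Subtype.ext (Finset.val_inj.mp (h1.symm.trans h2)))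
        have hterm : ∀ L : {x // x ∈ (S.erase a.1).powerset},
            (((colorsFor S a.1) ×ˢ (allTrees L.1 ×ˢ allTrees ((S.erase a.1) \ L.1))).image
              fun p => CBT.node a.1 p.1 p.2.1 p.2.2).card
            = (colorsFor S a.1).card * (Dcount L.1.card * Dcount (N - L.1.card)) := by
          intro L
          have hLsub : L.1 ⊆ S.erase a.1 := Finset.mem_powerset.mp L.2
          have hcL : L.1.card ≤ N := hcerase ▸ Finset.card_le_card hLsub
          rw [Finset.card_image_of_injective _ (by
            rintro ⟨c, l, r⟩ ⟨c', l', r'⟩ h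
            injection h with e1 e2 e3 e4
            simp_all)]
          rw [Finset.card_product, Finset.card_product]
          rw [ih L.1.card (by omega) L.1 rfl]
          rw [ih (N - L.1.card) (by omega) ((S.erase a.1) \ L.1)
            (by rw [Finset.card_sdiff_of_subset hLsub, hcerase])]
        rw [Finset.sum_congr rfl fun L _ => hterm L]
        rw [← Finset.mul_sum]
        congr 1
        rw [Finset.sum_attach ((S.erase a.1).powerset)
          (fun L => Dcount L.card * Dcount (N - L.card))]
        rw [Finset.sum_powerset ((S.erase a.1)) (fun L => Dcount L.card * Dcount (N - L.card))]
        rw [hcerase]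
        refine Finset.sum_congr rfl fun j hj => ?_
        have : ∀ t ∈ Finset.powersetCard j (S.erase a.1),
            Dcount t.card * Dcount (N - t.card) = Dcount j * Dcount (N - j) := by
          intro t ht
          rw [(Finset.mem_powersetCard.mp ht).2]
        rw [Finset.sum_congr rfl this, Finset.sum_const, smul_eq_mul,
          Finset.card_powersetCard, hcerase]
        ring
      rw [Finset.sum_congr rfl fun a _ => hinner a]
      rw [← Finset.sum_mul]
      rw [Finset.sum_attach S (fun a => (colorsFor S a).card)]
      rw [sum_card_colorsFor S (Finset.nonempty_iff_ne_empty.mpr h0), hS]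
      rw [Dcount_succ]

lemma card_allTrees (S : Finset ℕ) : (allTrees S).card = Dcount S.card :=
  card_allTrees_aux S.card S rfl

/-- The cardinality of `𝒟_n` equals `Σ_b n! Σ_{α ⊆ V(b)} Π_{v ∈ α} 1/h(v)`, where `b`
ranges over unlabeled binary trees on `n` vertices and `h(v)` is the number of
descendants of `v` (including `v`). -/
theorem card_Dset_eq_RHS (n : ℕ) (hn : 0 < n) :
    (Nat.card (Dset n) : ℚ) =
      ∑ b ∈ treesOfSize n, (n.factorial : ℚ) *
        ∑ α ∈ b.verts.powerset, ∏ v ∈ α, (1 : ℚ) / ((b.sub v).size : ℚ) := by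
  have hset : Dset n = ↑(allTrees (Finset.Icc 1 n)) := by
    ext B
    simp only [Dset, Set.mem_setOf_eq, Finset.mem_coe, mem_allTrees]
  have hcard : Nat.card (Dset n) = Dcount n := by
    rw [hset, Nat.card_coe_set_eq, Set.ncard_coe_finset, card_allTrees, Nat.card_Icc]
    congr 1
  rw [hcard]
  rw [← sum_Pval_eq_Dcount n]
  refine Finset.sum_congr rfl fun b _ => ?_
  congr 1
  rw [Pval, Finset.prod_add]
  simp
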